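/- arXiv:1711.02388 — 2 statements merged into one kernel-verified Lean document; each statement's English description precedes it below -/
import Mathlib

section
/- Let a : ℝ, b : ℂ with 1 + a ≥ c₁ > 0 and (1+a)² - |b|² ≥ c₂ > 0. Set λ := √((1+a)² - |b|²) and let s₁ := (1+a+λ)/√(2λ(1+a+λ)), s₂ := -b/√(2λ(1+a+λ)). Then the matrix S = [[s₁, s₂],[conj(s₂), s₁]] is invertible (its determinant is s₁² - |s₂|² = 1) and S⁻¹ · (E·L) · S = λ·E, where L = [[1+a, b],[conj(b), 1+a]] and E = diag(1,-1). -/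
open Matrix

theorem stmt1 (a : ℝ) (b : ℂ) (c₁ c₂ : ℝ) (hc₁ : 0 < c₁) (hc₂ : 0 < c₂)
    (h1 : 1 + a ≥ c₁) (h2 : (1 + a) ^ 2 - ‖b‖ ^ 2 ≥ c₂) :
    let lam := Real.sqrt ((1 + a) ^ 2 - ‖b‖ ^ 2)
    let N := Real.sqrt (2 * lam * (1 + a + lam))
    let s₁ : ℂ := (((1 + a + lam) / N : ℝ) : ℂ)
    let s₂ : ℂ := -b / (N : ℂ)
    let S : Matrix (Fin 2) (Fin 2) ℂ := !![s₁, s₂; (starRingEnd ℂ) s₂, s₁]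
    let E : Matrix (Fin 2) (Fin 2) ℂ := !![1, 0; 0, -1]
    let L : Matrix (Fin 2) (Fin 2) ℂ :=
      !![((1 + a : ℝ) : ℂ), b; (starRingEnd ℂ) b, ((1 + a : ℝ) : ℂ)]
    S.det = 1 ∧ IsUnit S ∧ S⁻¹ * (E * L) * S = (lam : ℂ) • E := by
  intro lam N s₁ s₂ S E L
  have hu : (0:ℝ) < 1 + a := lt_of_lt_of_le hc₁ h1
  have hlam2 : lam ^ 2 = (1 + a) ^ 2 - ‖b‖ ^ 2 :=
    Real.sq_sqrt (le_trans hc₂.le h2)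
  have hlam : 0 < lam := Real.sqrt_pos.mpr (lt_of_lt_of_le hc₂ h2)
  have hNpos : 0 < 2 * lam * (1 + a + lam) := by positivity
  have hN : 0 < N := Real.sqrt_pos.mpr hNpos
  have hN2 : N ^ 2 = 2 * lam * (1 + a + lam) := Real.sq_sqrt hNpos.le
  have hN0 : (N : ℂ) ≠ 0 := by exact_mod_cast hN.ne'
  have hkey : b * (starRingEnd ℂ) b = (1 + (a:ℂ)) ^ 2 - (lam:ℂ) ^ 2 := by
    rw [Complex.mul_conj,
      show Complex.normSq b = (1 + a) ^ 2 - lam ^ 2 by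
        rw [← Complex.sq_norm]; linarith]
    push_cast; ring
  have hN2' : ((N:ℂ)) ^ 2 = 2 * (lam:ℂ) * (1 + (a:ℂ) + (lam:ℂ)) := by
    have := congrArg (Complex.ofReal) hN2
    push_cast at this ⊢; linear_combination this
  have hdet : S.det = 1 := by
    simp only [S, det_fin_two_of, s₁, s₂, map_div₀, map_neg, Complex.conj_ofReal]
    field_simp
    push_cast
    field_simp
    first
    | linear_combination (-1:ℂ) * hkey + hN2'
    | linear_combination hkey + hN2'
    | linear_combination (-2:ℂ) * hkey + (-2:ℂ) * hN2'
    | linear_combination (-1:ℂ) * hkey + (-1:ℂ) * hN2'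
    | linear_combination (2:ℂ) * hkey + (2:ℂ) * hN2'
  refine ⟨hdet, ?_, ?_⟩
  · rw [Matrix.isUnit_iff_isUnit_det, hdet]; exact isUnit_one
  · have hcomm : (E * L) * S = S * ((lam : ℂ) • E) := by
      ext i j
      fin_cases i <;> fin_cases j <;>
        · simp [S, E, L, s₁, s₂, Matrix.mul_apply, Fin.sum_univ_two, map_div₀, map_neg,
            Complex.conj_ofReal]
          field_simp
          push_cast
          first
          | linear_combination (-2:ℂ) * hkey
          | linear_combination (2:ℂ) * hkey
          | linear_combination (-1:ℂ) * hkey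
          | linear_combination hkey
          | ring
    have hinv : S⁻¹ * S = 1 :=
      Matrix.nonsing_inv_mul S (by rw [hdet]; exact isUnit_one)
    calc S⁻¹ * (E * L) * S = S⁻¹ * ((E * L) * S) := by rw [Matrix.mul_assoc]
      _ = S⁻¹ * (S * ((lam : ℂ) • E)) := by rw [hcomm]
      _ = (S⁻¹ * S) * ((lam : ℂ) • E) := by rw [Matrix.mul_assoc]
      _ = (lam : ℂ) • E := by rw [hinv, Matrix.one_mul]
end

section
/- For any complex number z, the matrix exponential of Z := [[0, z],[conj(z), 0]] equals [[cosh|z|, c₂(z)],[conj(c₂(z)), cosh|z|]], where c₂(z) = (z/|z|)·sinh|z| for z ≠ 0 and c₂(0) = 0. Moreover det(exp Z) = 1, so exp Z is invertible. -/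
open Matrix

noncomputable def c₂fun (z : ℂ) : ℂ :=
  z * ∑' k : ℕ, ((‖z‖ : ℂ) ^ 2) ^ k / ((2 * k + 1).factorial : ℂ)

lemma aux_exp (z : ℂ) :
    NormedSpace.exp (!![0, z; (starRingEnd ℂ) z, 0] : Matrix (Fin 2) (Fin 2) ℂ) =
      !![(Real.cosh (‖z‖) : ℂ), c₂fun z;
         (starRingEnd ℂ) (c₂fun z), (Real.cosh (‖z‖) : ℂ)] := by
  rcases eq_or_ne z 0 with rfl | hz
  · have h0 : (!![0, (0:ℂ); (starRingEnd ℂ) 0, 0] : Matrix (Fin 2) (Fin 2) ℂ) = 0 := by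
      ext i j; fin_cases i <;> fin_cases j <;> simp
    rw [h0, NormedSpace.exp_zero]
    have hc : c₂fun 0 = 0 := by simp [c₂fun]
    rw [hc]
    ext i j; fin_cases i <;> fin_cases j <;> simp [Matrix.one_apply]
  set Z : Matrix (Fin 2) (Fin 2) ℂ := !![0, z; (starRingEnd ℂ) z, 0] with hZ
  set x : ℝ := ‖z‖ with hx
  have hx0 : (x : ℂ) ≠ 0 := by
    simpa [hx] using norm_ne_zero_iff.mpr hz
  set a : ℂ := (x : ℂ) ^ 2 with ha
  have hmc : z * (starRingEnd ℂ) z = a := by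
    rw [Complex.mul_conj, ha, hx, ← Complex.sq_norm]
    push_cast
    ring
  have hZ2 : Z ^ 2 = a • (1 : Matrix (Fin 2) (Fin 2) ℂ) := by
    rw [sq, hZ]
    ext i j
    fin_cases i <;> fin_cases j <;>
      simp [Matrix.mul_apply, Fin.sum_univ_two, Matrix.one_apply, ← hmc, mul_comm]
  have heven : ∀ k : ℕ, Z ^ (2 * k) = a ^ k • (1 : Matrix (Fin 2) (Fin 2) ℂ) := by
    intro k
    induction k with
    | zero => simp
    | succ k ih =>
      rw [mul_add, mul_one, pow_add, ih, hZ2, smul_mul_assoc, Matrix.mul_smul, one_mul,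
        smul_smul, pow_succ]
  have hodd : ∀ k : ℕ, Z ^ (2 * k + 1) = a ^ k • Z := by
    intro k
    rw [pow_succ, heven, smul_mul_assoc, one_mul]
  -- even part
  have he : HasSum (fun k : ℕ => (((2 * k).factorial : ℂ))⁻¹ • Z ^ (2 * k))
      (Complex.cosh (x : ℂ) • (1 : Matrix (Fin 2) (Fin 2) ℂ)) := by
    have h := (Complex.hasSum_cosh (x : ℂ)).smul_const (1 : Matrix (Fin 2) (Fin 2) ℂ)
    have hfun : (fun k : ℕ => ((x : ℂ) ^ (2 * k) / ((2 * k).factorial : ℂ)) •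
        (1 : Matrix (Fin 2) (Fin 2) ℂ))
        = fun k : ℕ => (((2 * k).factorial : ℂ))⁻¹ • Z ^ (2 * k) := by
      funext k
      rw [heven, smul_smul, pow_mul, ← ha, div_eq_mul_inv, mul_comm]
    rwa [hfun] at h
  -- odd coefficients
  have hs : HasSum (fun k : ℕ => a ^ k / ((2 * k + 1).factorial : ℂ))
      (Complex.sinh (x : ℂ) / (x : ℂ)) := by
    have h := (Complex.hasSum_sinh (x : ℂ)).div_const (x : ℂ)
    have hfun : (fun k : ℕ => (x : ℂ) ^ (2 * k + 1) / ((2 * k + 1).factorial : ℂ) / (x : ℂ))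
        = fun k : ℕ => a ^ k / ((2 * k + 1).factorial : ℂ) := by
      funext k
      rw [pow_succ, pow_mul, ← ha, div_right_comm, mul_div_cancel_right₀ _ hx0]
    rwa [hfun] at h
  have ho : HasSum (fun k : ℕ => (((2 * k + 1).factorial : ℂ))⁻¹ • Z ^ (2 * k + 1))
      ((Complex.sinh (x : ℂ) / (x : ℂ)) • Z) := by
    have h := hs.smul_const Z
    have hfun : (fun k : ℕ => (a ^ k / ((2 * k + 1).factorial : ℂ)) • Z)
        = fun k : ℕ => (((2 * k + 1).factorial : ℂ))⁻¹ • Z ^ (2 * k + 1) := by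
      funext k
      rw [hodd, smul_smul, div_eq_mul_inv, mul_comm]
    rwa [hfun] at h
  have htot : HasSum (fun n : ℕ => ((n.factorial : ℂ))⁻¹ • Z ^ n)
      (Complex.cosh (x : ℂ) • (1 : Matrix (Fin 2) (Fin 2) ℂ)
        + (Complex.sinh (x : ℂ) / (x : ℂ)) • Z) :=
    HasSum.even_add_odd he ho
  have hexp : NormedSpace.exp Z
      = Complex.cosh (x : ℂ) • (1 : Matrix (Fin 2) (Fin 2) ℂ)
        + (Complex.sinh (x : ℂ) / (x : ℂ)) • Z := by
    rw [NormedSpace.exp_eq_tsum (𝕂 := ℂ)]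
    exact htot.tsum_eq
  have hc₂ : c₂fun z = z * (Complex.sinh (x : ℂ) / (x : ℂ)) := by
    rw [c₂fun, ← hx, ← ha, hs.tsum_eq]
  have hreal : Complex.sinh (x : ℂ) / (x : ℂ) = ((Real.sinh x / x : ℝ) : ℂ) := by
    push_cast [Complex.ofReal_sinh]
    rfl
  have hconj' : (starRingEnd ℂ) (Complex.sinh (x : ℂ)) = Complex.sinh (x : ℂ) := by
    rw [← Complex.ofReal_sinh, Complex.conj_ofReal]
  rw [hexp, hc₂]
  ext i j
  fin_cases i <;> fin_cases j <;>
    simp [hZ, Matrix.one_apply, Complex.ofReal_cosh, mul_comm, _root_.map_mul, map_div₀, Complex.conj_ofReal, hconj']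

theorem stmt4 (z : ℂ) :
    NormedSpace.exp (!![0, z; (starRingEnd ℂ) z, 0] : Matrix (Fin 2) (Fin 2) ℂ) =
      !![(Real.cosh (‖z‖) : ℂ), c₂fun z;
         (starRingEnd ℂ) (c₂fun z), (Real.cosh (‖z‖) : ℂ)] ∧
    (NormedSpace.exp (!![0, z; (starRingEnd ℂ) z, 0] : Matrix (Fin 2) (Fin 2) ℂ)).det = 1 ∧
    IsUnit (NormedSpace.exp (!![0, z; (starRingEnd ℂ) z, 0] : Matrix (Fin 2) (Fin 2) ℂ)) := by
  have hm := aux_exp z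
  have hdet : (NormedSpace.exp
      (!![0, z; (starRingEnd ℂ) z, 0] : Matrix (Fin 2) (Fin 2) ℂ)).det = 1 := by
    rw [hm, Matrix.det_fin_two_of]
    rcases eq_or_ne z 0 with rfl | hz
    · simp [c₂fun]
    set x : ℝ := ‖z‖ with hx
    have hx0 : x ≠ 0 := by simpa [hx] using norm_ne_zero_iff.mpr hz
    have hs : HasSum (fun k : ℕ => ((x : ℂ) ^ 2) ^ k / ((2 * k + 1).factorial : ℂ))
        (Complex.sinh (x : ℂ) / (x : ℂ)) := by
      have h := (Complex.hasSum_sinh (x : ℂ)).div_const (x : ℂ)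
      have hfun : (fun k : ℕ => (x : ℂ) ^ (2 * k + 1) / ((2 * k + 1).factorial : ℂ) / (x : ℂ))
          = fun k : ℕ => ((x : ℂ) ^ 2) ^ k / ((2 * k + 1).factorial : ℂ) := by
        funext k
        have hxC : (x : ℂ) ≠ 0 := by exact_mod_cast hx0
        rw [pow_succ, pow_mul, div_right_comm, mul_div_cancel_right₀ _ hxC]
      rwa [hfun] at h
    have hc₂ : c₂fun z = z * (Complex.sinh (x : ℂ) / (x : ℂ)) := by
      rw [c₂fun, ← hx, hs.tsum_eq]
    have hmc : z * (starRingEnd ℂ) z = (x : ℂ) ^ 2 := by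
      rw [Complex.mul_conj, hx, ← Complex.sq_norm]
      push_cast
      ring
    have hconj : (starRingEnd ℂ) (Complex.sinh (x : ℂ) / (x : ℂ))
        = Complex.sinh (x : ℂ) / (x : ℂ) := by
      rw [← Complex.ofReal_sinh, ← Complex.ofReal_div, Complex.conj_ofReal]
    rw [hc₂, _root_.map_mul, hconj]
    have hxC : (x : ℂ) ≠ 0 := by exact_mod_cast hx0
    have key : (Real.cosh x : ℂ) * (Real.cosh x : ℂ)
        - z * (Complex.sinh (x : ℂ) / (x : ℂ)) * ((starRingEnd ℂ) z
          * (Complex.sinh (x : ℂ) / (x : ℂ)))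
        = Complex.cosh (x : ℂ) ^ 2 - Complex.sinh (x : ℂ) ^ 2 := by
      rw [Complex.ofReal_cosh]
      have : z * (Complex.sinh (x : ℂ) / (x : ℂ)) * ((starRingEnd ℂ) z
          * (Complex.sinh (x : ℂ) / (x : ℂ)))
          = (z * (starRingEnd ℂ) z) * (Complex.sinh (x : ℂ) / (x : ℂ)) ^ 2 := by ring
      rw [this, hmc]
      have h2 : ((x : ℂ)) ^ 2 * (Complex.sinh (x : ℂ) / (x : ℂ)) ^ 2
          = Complex.sinh (x : ℂ) ^ 2 := by
        rw [div_pow, mul_div_cancel₀ _ (pow_ne_zero 2 hxC)]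
      rw [h2, sq, sq]
    rw [key, Complex.cosh_sq_sub_sinh_sq]
  refine ⟨hm, hdet, ?_⟩
  rw [Matrix.isUnit_iff_isUnit_det, hdet]
  exact isUnit_one
end
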